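/- Let N_H, N_V be positive integers with N = N_H·N_V ≥ 2, N_s an integer with 0 ≤ N_s ≤ N, and a, b real numbers with sin(a/2) ≠ 0 and sin(b/2) ≠ 0; set E = (sin(N_H·a/2)/sin(a/2))·(sin(N_V·b/2)/sin(b/2)). With ζ_n = exp(i·(a·(p − (N_H+1)/2) + b·(q − (N_V+1)/2))) for grid points n = (p,q) and v(T) = 2·Σ_{n∈T} ζ_n − Σ_n ζ_n, the variance of v under the uniform distribution on size-N_s subsets T, i.e. the average of |v(T)|² minus the squared modulus of the average of v(T), equals 4·(N_s(N−N_s)/(N(N−1)))·(N − E²/N). -/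

import Mathlib

open Finset Complex Real

section Aux

lemma count_superset {α : Type*} [DecidableEq α] (s u : Finset α) (hu : u ⊆ s) (k : ℕ)
    (hk : u.card ≤ k) :
    ((s.powersetCard k).filter (fun T => u ⊆ T)).card = (s.card - u.card).choose (k - u.card) := by
  rw [← Finset.card_sdiff_of_subset hu, ← Finset.card_powersetCard]
  apply Finset.card_nbij' (fun T => T \ u) (fun T => T ∪ u)
  · intro T hT
    simp only [Finset.mem_coe, mem_filter, mem_powersetCard] at hT ⊢
    exact ⟨sdiff_subset_sdiff hT.1.1 le_rfl, by rw [card_sdiff_of_subset hT.2, hT.1.2]⟩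
  · intro T hT
    simp only [Finset.mem_coe, mem_filter, mem_powersetCard] at hT ⊢
    have hdisj : Disjoint T u := Finset.sdiff_disjoint.mono_left hT.1
    refine ⟨⟨union_subset (hT.1.trans sdiff_subset) hu, ?_⟩, subset_union_right⟩
    rw [card_union_of_disjoint hdisj, hT.2]
    omega
  · intro T hT
    simp only [Finset.mem_coe, mem_filter, mem_powersetCard] at hT
    exact sdiff_union_of_subset hT.2
  · intro T hT
    simp only [Finset.mem_coe, mem_powersetCard] at hT
    have hdisj : Disjoint T u := Finset.sdiff_disjoint.mono_left hT.1
    exact union_sdiff_cancel_right hdisj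

lemma count_superset_empty {α : Type*} [DecidableEq α] (s u : Finset α) (k : ℕ)
    (hk : k < u.card) :
    ((s.powersetCard k).filter (fun T => u ⊆ T)) = ∅ := by
  rw [Finset.filter_eq_empty_iff]
  intro T hT hsub
  simp only [mem_powersetCard] at hT
  have := Finset.card_le_card hsub
  omega

lemma sum_mem_pcc {α : Type*} [DecidableEq α] (s : Finset α) (k : ℕ) (f : α → ℂ) :
    ∑ T ∈ s.powersetCard k, ∑ x ∈ T, f x
      = ((if 1 ≤ k then (s.card - 1).choose (k - 1) else 0 : ℕ) : ℂ) * ∑ x ∈ s, f x := by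
  have h1 : ∀ T ∈ s.powersetCard k, ∑ x ∈ T, f x = ∑ x ∈ s, if x ∈ T then f x else 0 := by
    intro T hT
    rw [Finset.sum_ite_mem, Finset.inter_eq_right.mpr (Finset.mem_powersetCard.mp hT).1]
  rw [Finset.sum_congr rfl h1, Finset.sum_comm]
  rw [Finset.mul_sum]
  apply Finset.sum_congr rfl
  intro x hx
  rw [← Finset.sum_filter, Finset.sum_const]
  have hfe : (s.powersetCard k).filter (fun T => x ∈ T)
      = (s.powersetCard k).filter (fun T => ({x} : Finset α) ⊆ T) := by
    simp [Finset.singleton_subset_iff]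
  rw [hfe]
  by_cases hk : 1 ≤ k
  · rw [count_superset s {x} (Finset.singleton_subset_iff.mpr hx) k (by simpa using hk)]
    simp only [Finset.card_singleton, hk, if_true]
    rw [nsmul_eq_mul]
  · rw [count_superset_empty s {x} k (by simp; omega)]
    simp [hk]

lemma sum_offDiag_pcc {α : Type*} [DecidableEq α] (s : Finset α) (k : ℕ) (h : α → α → ℂ) :
    ∑ T ∈ s.powersetCard k, ∑ p ∈ T.offDiag, h p.1 p.2
      = ((if 2 ≤ k then (s.card - 2).choose (k - 2) else 0 : ℕ) : ℂ)
          * ∑ p ∈ s.offDiag, h p.1 p.2 := by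
  have h1 : ∀ T ∈ s.powersetCard k, ∑ p ∈ T.offDiag, h p.1 p.2
      = ∑ p ∈ s.offDiag, if p.1 ∈ T ∧ p.2 ∈ T then h p.1 p.2 else 0 := by
    intro T hT
    have hTs := (Finset.mem_powersetCard.mp hT).1
    rw [Finset.sum_ite, Finset.sum_const_zero, add_zero]
    apply Finset.sum_congr _ (fun _ _ => rfl)
    ext p
    simp only [Finset.mem_offDiag, Finset.mem_filter]
    constructor
    · rintro ⟨hp1, hp2, hne⟩; exact ⟨⟨hTs hp1, hTs hp2, hne⟩, hp1, hp2⟩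
    · rintro ⟨⟨_, _, hne⟩, hp1, hp2⟩; exact ⟨hp1, hp2, hne⟩
  rw [Finset.sum_congr rfl h1, Finset.sum_comm, Finset.mul_sum]
  apply Finset.sum_congr rfl
  intro p hp
  have hne : p.1 ≠ p.2 := (Finset.mem_offDiag.mp hp).2.2
  have hp1 : p.1 ∈ s := (Finset.mem_offDiag.mp hp).1
  have hp2 : p.2 ∈ s := (Finset.mem_offDiag.mp hp).2.1
  rw [← Finset.sum_filter, Finset.sum_const]
  have hfe : (s.powersetCard k).filter (fun T => p.1 ∈ T ∧ p.2 ∈ T)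
      = (s.powersetCard k).filter (fun T => ({p.1, p.2} : Finset α) ⊆ T) := by
    simp [Finset.insert_subset_iff, Finset.singleton_subset_iff]
  rw [hfe]
  have hcard : ({p.1, p.2} : Finset α).card = 2 := Finset.card_pair hne
  by_cases hk : 2 ≤ k
  · rw [count_superset s {p.1, p.2} (by simp [Finset.insert_subset_iff, hp1, hp2]) k
      (by omega), hcard]
    simp only [hk, if_true]
    rw [nsmul_eq_mul]
  · rw [count_superset_empty s {p.1, p.2} k (by omega)]
    simp [hk]

lemma sum_sum_split {α : Type*} [DecidableEq α] (t : Finset α) (h : α → α → ℂ) :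
    ∑ x ∈ t, ∑ y ∈ t, h x y = ∑ x ∈ t, h x x + ∑ p ∈ t.offDiag, h p.1 p.2 := by
  rw [← Finset.sum_product', ← Finset.diag_union_offDiag t,
    Finset.sum_union (Finset.disjoint_diag_offDiag t), Finset.sum_diag]

lemma exp_sub_exp_eq (x : ℝ) :
    Complex.exp (Complex.I * x) - Complex.exp (-(Complex.I * x))
      = 2 * Complex.I * (Real.sin x : ℂ) := by
  rw [Complex.ofReal_sin, Complex.sin]
  ring_nf
  rw [Complex.I_sq]
  ring_nf

lemma dirichlet_sum (M : ℕ) (a : ℝ) (ha : Real.sin (a / 2) ≠ 0) :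
    ∑ p ∈ Finset.Icc 1 M, Complex.exp (Complex.I * ((a * ((p : ℝ) - (M + 1) / 2) : ℝ) : ℂ))
      = ((Real.sin (M * a / 2) / Real.sin (a / 2) : ℝ) : ℂ) := by
  have hca : ((Real.sin (a/2) : ℝ) : ℂ) ≠ 0 := Complex.ofReal_ne_zero.mpr ha
  have hden : (2 * Complex.I * ((Real.sin (a/2) : ℝ) : ℂ)) ≠ 0 :=
    mul_ne_zero (by simp [Complex.I_ne_zero]) hca
  apply mul_right_cancel₀ hden
  have step1 : (∑ p ∈ Finset.Icc 1 M,
        Complex.exp (Complex.I * ((a * ((p : ℝ) - (M + 1) / 2) : ℝ) : ℂ)))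
        * (2 * Complex.I * ((Real.sin (a/2) : ℝ) : ℂ))
      = ∑ p ∈ Finset.range M,
          (Complex.exp (Complex.I * (a : ℂ) * (((p + 1 : ℕ) : ℂ) - (M : ℂ)/2))
            - Complex.exp (Complex.I * (a : ℂ) * ((p : ℂ) - (M : ℂ)/2))) := by
    rw [← exp_sub_exp_eq, ← Finset.Ico_add_one_right_eq_Icc, Finset.sum_Ico_eq_sum_range, Finset.sum_mul]
    apply Finset.sum_congr (by norm_num)
    intro p _
    rw [mul_sub, ← Complex.exp_add, ← Complex.exp_add]
    have e1 : Complex.I * ((a * (((1 + p : ℕ) : ℝ) - ((M : ℝ) + 1) / 2) : ℝ) : ℂ)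
        + Complex.I * ((a/2 : ℝ) : ℂ)
        = Complex.I * (a : ℂ) * (((p + 1 : ℕ) : ℂ) - (M : ℂ)/2) := by
      push_cast; ring
    have e2 : Complex.I * ((a * (((1 + p : ℕ) : ℝ) - ((M : ℝ) + 1) / 2) : ℝ) : ℂ)
        + -(Complex.I * ((a/2 : ℝ) : ℂ))
        = Complex.I * (a : ℂ) * ((p : ℂ) - (M : ℂ)/2) := by
      push_cast; ring
    rw [e1, e2]
  rw [step1, Finset.sum_range_sub (fun p => Complex.exp (Complex.I * a * ((p : ℂ) - (M : ℂ)/2))) M]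
  have e3 : Complex.I * (a:ℂ) * ((M:ℂ) - (M:ℂ)/2) = Complex.I * ((M * a / 2 : ℝ) : ℂ) := by
    push_cast; ring
  have e4 : Complex.I * (a:ℂ) * (((0:ℕ):ℂ) - (M:ℂ)/2) = -(Complex.I * ((M * a / 2 : ℝ) : ℂ)) := by
    push_cast; ring
  rw [e3, e4, exp_sub_exp_eq, Complex.ofReal_div,
    show (2*Complex.I*((Real.sin (a/2) : ℝ):ℂ)) = ((Real.sin (a/2) : ℝ):ℂ) * (2*Complex.I) from by
      ring,
    ← mul_assoc, div_mul_cancel₀ _ hca]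
  ring

lemma final_algebra (n yn k e : ℝ) (hn : n ≠ 0) (hn1 : n - 1 ≠ 0) (hk : k ≠ 0) :
    (1/k) * (4*(k*yn + (yn*(yn-1)*k/(n*(n-1)))*(e^2 - n)) - 4*(yn*k/n)*e^2 + k*e^2)
      - ((2*(yn*k/n) - k)*e/k)^2
    = 4*(yn*(n - yn)/(n*(n-1)))*(n - e^2/n) := by
  field_simp
  ring

end Aux

/-- Variance of the RIS-side random factor of the RIBES scheme:
`V[v] = 4·(Nₛ(N−Nₛ)/(N(N−1)))·(N − E²/N)` with `E = μ₂·μ₃`. -/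
theorem stmt_8 (NH NV : ℕ) (hNH : 0 < NH) (hNV : 0 < NV)
    (N : ℕ) (hN : N = NH * NV) (hN2 : 2 ≤ N) (Ns : ℕ) (hNs : Ns ≤ N)
    (a b : ℝ) (ha : Real.sin (a / 2) ≠ 0) (hb : Real.sin (b / 2) ≠ 0) :
    let E : ℝ := (Real.sin (NH * a / 2) / Real.sin (a / 2)) *
        (Real.sin (NV * b / 2) / Real.sin (b / 2))
    let grid : Finset (ℕ × ℕ) := Finset.Icc 1 NH ×ˢ Finset.Icc 1 NV
    let ζ : ℕ × ℕ → ℂ := fun n =>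
      Complex.exp (Complex.I *
        ((a * ((n.1 : ℝ) - (NH + 1) / 2) + b * ((n.2 : ℝ) - (NV + 1) / 2) : ℝ) : ℂ))
    let v : Finset (ℕ × ℕ) → ℂ := fun T => 2 * ∑ n ∈ T, ζ n - ∑ n ∈ grid, ζ n
    (1 / (Nat.choose N Ns : ℝ)) *
        ∑ T ∈ grid.powersetCard Ns, ‖v T‖ ^ 2
      - ‖(1 / (Nat.choose N Ns : ℂ)) *
          ∑ T ∈ grid.powersetCard Ns, v T‖ ^ 2
      = 4 * ((Ns : ℝ) * ((N : ℝ) - Ns) / ((N : ℝ) * ((N : ℝ) - 1))) *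
          ((N : ℝ) - E ^ 2 / N) := by
  intro E grid ζ v
  -- basic cardinalities
  have hNcard : grid.card = N := by
    simp only [grid, Finset.card_product, Nat.card_Icc, Nat.add_sub_cancel]
    omega
  set K := Nat.choose N Ns with hKdef
  have hK0 : 0 < K := Nat.choose_pos hNs
  have hKr : (K : ℝ) ≠ 0 := Nat.cast_ne_zero.mpr hK0.ne'
  have hTcard : (grid.powersetCard Ns).card = K := by
    rw [Finset.card_powersetCard, hNcard]
  -- the full sum S
  have hS : ∑ n ∈ grid, ζ n = (E : ℂ) := by
    show ∑ n ∈ Finset.Icc 1 NH ×ˢ Finset.Icc 1 NV, ζ n = (E : ℂ)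
    rw [Finset.sum_product]
    have h1 : ∀ p ∈ Finset.Icc 1 NH, ∀ q ∈ Finset.Icc 1 NV, ζ (p, q)
        = Complex.exp (Complex.I * ((a * ((p : ℝ) - ((NH : ℝ) + 1) / 2) : ℝ) : ℂ))
          * Complex.exp (Complex.I * ((b * ((q : ℝ) - ((NV : ℝ) + 1) / 2) : ℝ) : ℂ)) := by
      intro p _ q _
      show Complex.exp _ = _
      rw [← Complex.exp_add]
      congr 1
      push_cast
      ring
    rw [Finset.sum_congr rfl (fun p hp => Finset.sum_congr rfl (h1 p hp)),
      ← Finset.sum_mul_sum, dirichlet_sum NH a ha, dirichlet_sum NV b hb,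
      ← Complex.ofReal_mul]
  have hSconj : (starRingEnd ℂ) (∑ n ∈ grid, ζ n) = (E : ℂ) := by
    rw [hS, Complex.conj_ofReal]
  -- unit modulus
  have hunit : ∀ n : ℕ × ℕ, ζ n * (starRingEnd ℂ) (ζ n) = 1 := by
    intro n
    show Complex.exp _ * (starRingEnd ℂ) (Complex.exp _) = 1
    rw [← Complex.exp_conj, map_mul, Complex.conj_I, Complex.conj_ofReal,
      ← Complex.exp_add]
    simp
  -- counting constants
  have keychoose : ∀ (n k : ℕ), (n + 1) * n.choose k = (n + 1).choose (k + 1) * (k + 1) := by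
    intro n k
    have := Nat.add_one_mul_choose_eq n k
    simpa [Nat.succ_eq_add_one] using this
  set c1 : ℕ := if 1 ≤ Ns then (N - 1).choose (Ns - 1) else 0 with hc1def
  set c2 : ℕ := if 2 ≤ Ns then (N - 2).choose (Ns - 2) else 0 with hc2def
  have hc1 : (c1 : ℝ) * N = Ns * K := by
    by_cases h1 : 1 ≤ Ns
    · have hnat : N * (N - 1).choose (Ns - 1) = K * Ns := by
        have := keychoose (N - 1) (Ns - 1)
        rw [(by omega : N - 1 + 1 = N), (by omega : Ns - 1 + 1 = Ns)] at this
        rw [this]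
      simp only [hc1def, h1, if_true]
      have : (N - 1).choose (Ns - 1) * N = Ns * K := by
        rw [mul_comm, hnat, mul_comm]
      exact_mod_cast this
    · have h0 : Ns = 0 := by omega
      simp [hc1def, h1, h0]
  have hc2 : (c2 : ℝ) * ((N : ℝ) * ((N : ℝ) - 1)) = Ns * ((Ns : ℝ) - 1) * K := by
    by_cases h2 : 2 ≤ Ns
    · have hnat1 : (N - 1) * (N - 2).choose (Ns - 2) = (N - 1).choose (Ns - 1) * (Ns - 1) := by
        have := keychoose (N - 2) (Ns - 2)
        rw [(by omega : N - 2 + 1 = N - 1), (by omega : Ns - 2 + 1 = Ns - 1)] at this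
        exact this
      have hnat2 : N * (N - 1).choose (Ns - 1) = K * Ns := by
        have := keychoose (N - 1) (Ns - 1)
        rw [(by omega : N - 1 + 1 = N), (by omega : Ns - 1 + 1 = Ns)] at this
        rw [this]
      have hnat : (N * (N - 1)) * (N - 2).choose (Ns - 2) = K * Ns * (Ns - 1) := by
        calc (N * (N - 1)) * (N - 2).choose (Ns - 2)
            = N * ((N - 1) * (N - 2).choose (Ns - 2)) := by ring
          _ = N * ((N - 1).choose (Ns - 1) * (Ns - 1)) := by rw [hnat1]
          _ = (N * (N - 1).choose (Ns - 1)) * (Ns - 1) := by ring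
          _ = K * Ns * (Ns - 1) := by rw [hnat2]
      simp only [hc2def, h2, if_true]
      have hcast : ((N : ℝ) - 1) = ((N - 1 : ℕ) : ℝ) := by
        rw [Nat.cast_sub (by omega : 1 ≤ N)]; norm_num
      have hcast2 : ((Ns : ℝ) - 1) = ((Ns - 1 : ℕ) : ℝ) := by
        rw [Nat.cast_sub (by omega : 1 ≤ Ns)]; norm_num
      rw [hcast, hcast2]
      have : (N - 2).choose (Ns - 2) * (N * (N - 1)) = Ns * (Ns - 1) * K := by
        rw [mul_comm, hnat]; ring
      exact_mod_cast this
    · have h0 : Ns = 0 ∨ Ns = 1 := by omega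
      rcases h0 with h0 | h0 <;> simp [hc2def, h2, h0]
  -- sum of |zeta| over grid
  have hdiag : ∑ x ∈ grid, ζ x * (starRingEnd ℂ) (ζ x) = (N : ℂ) := by
    rw [Finset.sum_congr rfl (fun x _ => hunit x), Finset.sum_const, hNcard,
      nsmul_eq_mul, mul_one]
  -- off-diagonal sum over grid
  have hoff : ∑ p ∈ grid.offDiag, ζ p.1 * (starRingEnd ℂ) (ζ p.2)
      = (E : ℂ) * (E : ℂ) - (N : ℂ) := by
    have := sum_sum_split grid (fun x y => ζ x * (starRingEnd ℂ) (ζ y))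
    have hdouble : ∑ x ∈ grid, ∑ y ∈ grid, ζ x * (starRingEnd ℂ) (ζ y)
        = (E : ℂ) * (E : ℂ) := by
      rw [← Finset.sum_mul_sum, hS, ← map_sum, hS, Complex.conj_ofReal]
    rw [hdouble, hdiag] at this
    linear_combination -this
  -- first moment sums
  have hA : ∑ T ∈ grid.powersetCard Ns, ∑ n ∈ T, ζ n = (c1 : ℂ) * (E : ℂ) := by
    rw [sum_mem_pcc, hNcard, ← hc1def, hS]
  have hAbar : ∑ T ∈ grid.powersetCard Ns, ∑ n ∈ T, (starRingEnd ℂ) (ζ n)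
      = (c1 : ℂ) * (E : ℂ) := by
    rw [sum_mem_pcc, hNcard, ← hc1def, ← map_sum, hS, Complex.conj_ofReal]
  -- second moment sum
  have hB : ∑ T ∈ grid.powersetCard Ns,
        ((∑ n ∈ T, ζ n) * ∑ m ∈ T, (starRingEnd ℂ) (ζ m))
      = (K : ℂ) * (Ns : ℂ) + (c2 : ℂ) * ((E : ℂ) * (E : ℂ) - (N : ℂ)) := by
    have hper : ∀ T ∈ grid.powersetCard Ns,
        ((∑ n ∈ T, ζ n) * ∑ m ∈ T, (starRingEnd ℂ) (ζ m))
          = (Ns : ℂ) + ∑ p ∈ T.offDiag, ζ p.1 * (starRingEnd ℂ) (ζ p.2) := by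
      intro T hT
      rw [Finset.sum_mul_sum, sum_sum_split]
      congr 1
      rw [Finset.sum_congr rfl (fun x _ => hunit x), Finset.sum_const,
        (Finset.mem_powersetCard.mp hT).2, nsmul_eq_mul, mul_one]
    rw [Finset.sum_congr rfl hper, Finset.sum_add_distrib, Finset.sum_const, hTcard,
      sum_offDiag_pcc grid Ns (fun x y => ζ x * (starRingEnd ℂ) (ζ y)), hNcard, ← hc2def, hoff, nsmul_eq_mul]
  -- sum of v
  have hsumv : ∑ T ∈ grid.powersetCard Ns, v T
      = (((2 * (c1 : ℝ) - (K : ℝ)) * E : ℝ) : ℂ) := by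
    show ∑ T ∈ grid.powersetCard Ns, (2 * ∑ n ∈ T, ζ n - ∑ n ∈ grid, ζ n) = _
    rw [Finset.sum_sub_distrib, ← Finset.mul_sum, hA, Finset.sum_const, hTcard, hS]
    push_cast
    ring
  -- sum of v * conj v
  have hVV : ∑ T ∈ grid.powersetCard Ns, v T * (starRingEnd ℂ) (v T)
      = ((4 * ((K : ℝ) * (Ns : ℝ) + (c2 : ℝ) * (E ^ 2 - (N : ℝ)))
          - 4 * (c1 : ℝ) * E ^ 2 + (K : ℝ) * E ^ 2 : ℝ) : ℂ) := by
    have hper2 : ∀ T ∈ grid.powersetCard Ns, v T * (starRingEnd ℂ) (v T)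
        = 4 * ((∑ n ∈ T, ζ n) * ∑ m ∈ T, (starRingEnd ℂ) (ζ m))
          - 2 * (E : ℂ) * (∑ n ∈ T, ζ n)
          - 2 * (E : ℂ) * (∑ m ∈ T, (starRingEnd ℂ) (ζ m))
          + (E : ℂ) * (E : ℂ) := by
      intro T _
      have hcv : (starRingEnd ℂ) (v T) = 2 * (∑ m ∈ T, (starRingEnd ℂ) (ζ m)) - (E : ℂ) := by
        show (starRingEnd ℂ) (2 * ∑ n ∈ T, ζ n - ∑ n ∈ grid, ζ n) = _
        rw [map_sub, map_mul, map_sum, hSconj, map_ofNat]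
      have hv : v T = 2 * (∑ n ∈ T, ζ n) - (E : ℂ) := by
        show 2 * ∑ n ∈ T, ζ n - ∑ n ∈ grid, ζ n = _
        rw [hS]
      rw [hcv, hv]
      ring
    rw [Finset.sum_congr rfl hper2, Finset.sum_add_distrib, Finset.sum_sub_distrib,
      Finset.sum_sub_distrib, ← Finset.mul_sum, ← Finset.mul_sum, ← Finset.mul_sum,
      hA, hAbar, hB, Finset.sum_const, hTcard, nsmul_eq_mul]
    push_cast
    ring
  -- real form of the second moment
  have habs2 : ∑ T ∈ grid.powersetCard Ns, ‖v T‖ ^ 2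
      = 4 * ((K : ℝ) * (Ns : ℝ) + (c2 : ℝ) * (E ^ 2 - (N : ℝ)))
        - 4 * (c1 : ℝ) * E ^ 2 + (K : ℝ) * E ^ 2 := by
    have hc : ((∑ T ∈ grid.powersetCard Ns, ‖v T‖ ^ 2 : ℝ) : ℂ)
        = ∑ T ∈ grid.powersetCard Ns, v T * (starRingEnd ℂ) (v T) := by
      push_cast
      apply Finset.sum_congr rfl
      intro T _
      rw [← Complex.ofReal_pow, Complex.sq_norm]
      exact (Complex.mul_conj (v T)).symm
    exact_mod_cast hc.trans hVV
  -- real form of the mean term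
  have hmean : ‖(1 / (K : ℂ)) * ∑ T ∈ grid.powersetCard Ns, v T‖ ^ 2
      = ((2 * (c1 : ℝ) - (K : ℝ)) * E / (K : ℝ)) ^ 2 := by
    rw [hsumv,
      show (1 / (K : ℂ)) * (((2 * (c1 : ℝ) - (K : ℝ)) * E : ℝ) : ℂ)
        = (((2 * (c1 : ℝ) - (K : ℝ)) * E / (K : ℝ) : ℝ) : ℂ) from by push_cast; ring,
      Complex.norm_real, Real.norm_eq_abs, _root_.sq_abs]
  -- nonzero denominators
  have hNr : (N : ℝ) ≠ 0 := Nat.cast_ne_zero.mpr (by omega)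
  have hN1r : (N : ℝ) - 1 ≠ 0 := sub_ne_zero.mpr (by exact_mod_cast (by omega : N ≠ 1))
  -- solve for c1, c2
  have c1r : (c1 : ℝ) = (Ns : ℝ) * (K : ℝ) / (N : ℝ) := by
    rw [eq_div_iff hNr]; exact hc1
  have c2r : (c2 : ℝ) = (Ns : ℝ) * ((Ns : ℝ) - 1) * (K : ℝ) / ((N : ℝ) * ((N : ℝ) - 1)) := by
    rw [eq_div_iff (mul_ne_zero hNr hN1r)]; exact hc2
  rw [habs2, hmean, c1r, c2r]
  have := final_algebra (N : ℝ) (Ns : ℝ) (K : ℝ) E hNr hN1r hKr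
  linear_combination this
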